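/- arXiv:2605.09865 — 3 statements merged into one kernel-verified Lean document; each statement's English description precedes it below -/
import Mathlib

section
/- Let n be a prime, and let H = [CPM(β^{j·l_i})]_{0≤i<m, 0≤j<n} with l_0, ..., l_{m−1} distinct modulo n. Then H satisfies the row–column constraint: any two distinct rows of H have at most one position where both have entry 1. -/
/-- Casting `Fin n` to `ZMod n` (via `ℕ`) is injective. -/
lemma fin_cast_zmod_inj {n : ℕ} [NeZero n] {x y : Fin n}
    (h : ((x : ℕ) : ZMod n) = ((y : ℕ) : ZMod n)) : x = y := by
  have hx := ZMod.val_cast_of_lt x.isLt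
  have hy := ZMod.val_cast_of_lt y.isLt
  have : (x : ℕ) = (y : ℕ) := by rw [← hx, ← hy, h]
  exact Fin.ext this

/-- The CPM-dispersion `H = [CPM(β^{j·l_i})]` with `l_0,...,l_{m-1}`
distinct modulo the prime `n` satisfies the row–column constraint: any two distinct
rows of `H` have at most one position where both have entry `1`. -/
theorem cpm_dispersion_rc_constraint
    (F : Type*) [Field F] [Fintype F] (s n m : ℕ) (hs : Fintype.card F = 2 ^ s)
    (hn : n.Prime) (β : F) (hβ : orderOf β = n)
    (l : Fin m → ℕ)
    (hldist : ∀ i i' : Fin m, l i % n = l i' % n → i = i')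
    (H : Matrix (Fin m × Fin n) (Fin n × Fin n) (ZMod 2))
    (hH : ∀ (i : Fin m) (a : Fin n) (j : Fin n) (b : Fin n),
      H (i, a) (j, b) = if (b : ℕ) = ((a : ℕ) + (j : ℕ) * l i) % n then 1 else 0) :
    ∀ r r' : Fin m × Fin n, r ≠ r' →
      (Finset.univ.filter
        (fun c : Fin n × Fin n => H r c = 1 ∧ H r' c = 1)).card ≤ 1 := by
  haveI : Fact n.Prime := ⟨hn⟩
  haveI : NeZero n := ⟨hn.ne_zero⟩
  rintro ⟨i, a⟩ ⟨i', a'⟩ hrr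
  apply Finset.card_le_one.mpr
  rintro ⟨j, b⟩ hc ⟨j₂, b₂⟩ hc₂
  simp only [Finset.mem_filter, Finset.mem_univ, true_and, hH] at hc hc₂
  have extract : ∀ (P : Prop) [Decidable P], (if P then (1 : ZMod 2) else 0) = 1 → P := by
    intro P _ h
    by_contra hP
    rw [if_neg hP] at h
    exact absurd h (by decide)
  have h1 := extract _ hc.1
  have h2 := extract _ hc.2
  have h3 := extract _ hc₂.1
  have h4 := extract _ hc₂.2
  -- move to ZMod n
  have cast_eq : ∀ (x : Fin n) (y : ℕ), (x : ℕ) = y % n →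
      ((x : ℕ) : ZMod n) = (y : ZMod n) := by
    intro x y h
    rw [h]
    simp [ZMod.natCast_mod]
  have e1 := cast_eq _ _ h1
  have e2 := cast_eq _ _ h2
  have e3 := cast_eq _ _ h3
  have e4 := cast_eq _ _ h4
  push_cast at e1 e2 e3 e4
  by_cases hii : i = i'
  · subst hii
    have ha : ((a : ℕ) : ZMod n) = ((a' : ℕ) : ZMod n) := by
      have := e1.symm.trans e2
      linear_combination this
    have : a = a' := fin_cast_zmod_inj ha
    exact absurd (by rw [this]) hrr
  · have hl : ((l i : ZMod n)) ≠ (l i' : ZMod n) := by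
      intro h
      exact hii (hldist i i' ((ZMod.natCast_eq_natCast_iff' _ _ _).mp h))
    have key : ((j : ℕ) : ZMod n) * ((l i : ZMod n) - (l i' : ZMod n))
        = ((j₂ : ℕ) : ZMod n) * ((l i : ZMod n) - (l i' : ZMod n)) := by
      have hA := e1.symm.trans e2
      have hB := e3.symm.trans e4
      ring_nf
      ring_nf at hA hB
      linear_combination hA - hB
    have hj : ((j : ℕ) : ZMod n) = ((j₂ : ℕ) : ZMod n) :=
      mul_right_cancel₀ (sub_ne_zero.mpr hl) key
    have hjj : j = j₂ := fin_cast_zmod_inj hj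
    subst hjj
    have hb : ((b : ℕ) : ZMod n) = ((b₂ : ℕ) : ZMod n) := e1.trans e3.symm
    rw [fin_cast_zmod_inj hb]
end

section
/- Let n be prime, β of order n in a field F with n invertible in F, and for each 0 ≤ i < m and 0 ≤ j < n let D_{i,j} = diag(1, β^{j l_i}, β^{2 j l_i}, ..., β^{(n−1) j l_i}). Let V_blk = diag(V, ..., V) (n copies) where V = [β^{ab}]_{0≤a,b<n}. Then the block matrix equality holds: V_blk · [D_{i,j}]_{i,j} · V_blk^{-1} = [CPM(β^{j l_i})]_{i,j}, i.e., conjugating the interleaved block-diagonal parity-check structure by the blockwise Galois Fourier transform yields exactly the CPM-dispersion of B. -/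
open Classical in
lemma geom_sum_root {F : Type*} [Field F] (n : ℕ) (x : F) (hx : x ^ n = 1) :
    ∑ b : Fin n, x ^ (b : ℕ) = if x = 1 then (n : F) else 0 := by
  rw [Fin.sum_univ_eq_sum_range]
  split_ifs with h
  · simp [h]
  · have h2 := geom_sum_mul x n
    rw [hx, sub_self] at h2
    rcases mul_eq_zero.mp h2 with h1 | h1
    · exact h1
    · exact absurd (sub_eq_zero.mp h1) h

lemma key_iff {F : Type*} [Field F] {n : ℕ} (hn : 0 < n) {β : F} (hβ : orderOf β = n)
    (k : ℕ) (b : Fin n) :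
    β ^ (k + (b : ℕ) * (n - 1)) = 1 ↔ (b : ℕ) = k % n := by
  haveI : NeZero n := ⟨hn.ne'⟩
  rw [← orderOf_dvd_iff_pow_eq_one, hβ, ← ZMod.natCast_eq_zero_iff]
  have hcast : ((k + (b : ℕ) * (n - 1) : ℕ) : ZMod n) = (k : ZMod n) - (b : ℕ) := by
    push_cast
    have : ((n - 1 : ℕ) : ZMod n) = -1 := by
      have : ((n - 1 : ℕ) : ZMod n) + 1 = 0 := by
        rw [← Nat.cast_one (R := ZMod n), ← Nat.cast_add, Nat.sub_add_cancel hn,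
          ZMod.natCast_self]
      linear_combination this
    rw [this]; ring
  rw [hcast, sub_eq_zero]
  constructor
  · intro h
    rw [← ZMod.natCast_mod k n] at h
    have := congrArg ZMod.val h
    rwa [ZMod.val_cast_of_lt (Nat.mod_lt k hn), ZMod.val_cast_of_lt b.is_lt, eq_comm] at this
  · intro h
    rw [h, ZMod.natCast_mod]




/-- Conjugating the interleaved block-diagonal array `[D_{i,j}]` of diagonal
matrices `D_{i,j} = diag(β^{t·j·l_i})_{0≤t<n}` by the block-diagonal Galois Fourier
transform `V_blk = diag(V, ..., V)` (with `V = [β^{ab}]`) yields exactly the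
CPM-dispersion of `B`:  `V_blk · [D_{i,j}] · V_blk⁻¹ = [CPM(β^{j l_i})]`. -/
theorem gft_conjugation_yields_cpm_dispersion
    (F : Type*) [Field F] (n m : ℕ) (hn : n.Prime)
    (β : F) (hβ : orderOf β = n) (hninv : (n : F) ≠ 0)
    (l : Fin m → ℕ)
    (Dblk : Matrix (Fin m × Fin n) (Fin n × Fin n) F)
    (hD : ∀ (i : Fin m) (a : Fin n) (j : Fin n) (b : Fin n),
      Dblk (i, a) (j, b) = if a = b then β ^ ((a : ℕ) * ((j : ℕ) * l i)) else 0)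
    (Vm : Matrix (Fin m × Fin n) (Fin m × Fin n) F)
    (hVm : ∀ (i : Fin m) (a : Fin n) (i' : Fin m) (a' : Fin n),
      Vm (i, a) (i', a') = if i = i' then β ^ ((a : ℕ) * (a' : ℕ)) else 0)
    (Vn : Matrix (Fin n × Fin n) (Fin n × Fin n) F)
    (hVn : ∀ (j : Fin n) (b : Fin n) (j' : Fin n) (b' : Fin n),
      Vn (j, b) (j', b') = if j = j' then β ^ ((b : ℕ) * (b' : ℕ)) else 0)
    (Hcpm : Matrix (Fin m × Fin n) (Fin n × Fin n) F)
    (hHcpm : ∀ (i : Fin m) (a : Fin n) (j : Fin n) (b : Fin n),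
      Hcpm (i, a) (j, b) = if (b : ℕ) = ((a : ℕ) + (j : ℕ) * l i) % n then 1 else 0) :
    Vm * Dblk * Vn⁻¹ = Hcpm := by
  have hn0 : 0 < n := hn.pos
  have hβn : β ^ n = 1 := by rw [← hβ]; exact pow_orderOf_eq_one β
  -- the explicit inverse of Vn
  set W : Matrix (Fin n × Fin n) (Fin n × Fin n) F :=
    fun p q => if p.1 = q.1 then (n : F)⁻¹ * β ^ ((p.2 : ℕ) * (q.2 : ℕ) * (n - 1)) else 0
    with hW
  have hVW : Vn * W = 1 := by
    ext ⟨j, b⟩ ⟨j', b'⟩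
    rw [Matrix.mul_apply, Fintype.sum_prod_type]
    simp only [hVn, hW, Matrix.one_apply, Prod.mk.injEq, ite_mul, zero_mul, mul_ite, mul_zero]
    rw [Finset.sum_comm]
    simp only [Finset.sum_ite_eq, Finset.sum_ite_eq', Finset.mem_univ, if_true]
    by_cases hj : j = j'
    · subst hj
      simp only [eq_self_iff_true, if_true, true_and]
      have hsum : ∀ b'' : Fin n,
          β ^ ((b : ℕ) * (b'' : ℕ)) * ((n : F)⁻¹ * β ^ ((b'' : ℕ) * (b' : ℕ) * (n - 1)))
          = (n : F)⁻¹ * (β ^ ((b : ℕ) + (b' : ℕ) * (n - 1))) ^ (b'' : ℕ) := by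
        intro b''
        rw [← pow_mul, ← mul_assoc, mul_comm (β ^ _), mul_assoc, ← pow_add]
        ring_nf
      rw [Finset.sum_congr rfl fun b'' _ => hsum b'', ← Finset.mul_sum,
        geom_sum_root n _ (by rw [← pow_mul, mul_comm, pow_mul, hβn, one_pow]),
        key_iff hn0 hβ (b : ℕ) b', Nat.mod_eq_of_lt b.is_lt]
      by_cases hb : (b' : ℕ) = (b : ℕ)
      · have : b = b' := Fin.ext hb.symm
        simp [this, hb, inv_mul_cancel₀ hninv]
      · have : ¬ b = b' := fun h => hb (by rw [h])
        simp [this, hb]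
    · simp [hj]
  have hVninv : Vn⁻¹ = W := Matrix.inv_eq_right_inv hVW
  ext ⟨i, a⟩ ⟨j, b⟩
  rw [hVninv, Matrix.mul_apply, Fintype.sum_prod_type, hHcpm]
  have hVD : ∀ (j' b' : Fin n), (Vm * Dblk) (i, a) (j', b')
      = β ^ ((a : ℕ) * (b' : ℕ) + (b' : ℕ) * ((j' : ℕ) * l i)) := by
    intro j' b'
    rw [Matrix.mul_apply, Fintype.sum_prod_type]
    simp only [hVm, hD, ite_mul, zero_mul, mul_ite, mul_zero]
    simp only [Finset.sum_ite_eq, Finset.mem_univ, if_true, Finset.sum_ite_eq',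
      ← pow_add]
  simp only [hVD, hW]
  rw [Finset.sum_comm]
  simp only [mul_ite, mul_zero, Finset.sum_ite_eq, Finset.sum_ite_eq', Finset.mem_univ, if_true]
  have hsum : ∀ b' : Fin n,
      β ^ ((a : ℕ) * (b' : ℕ) + (b' : ℕ) * ((j : ℕ) * l i)) *
        ((n : F)⁻¹ * β ^ ((b' : ℕ) * (b : ℕ) * (n - 1)))
      = (n : F)⁻¹ * (β ^ (((a : ℕ) + (j : ℕ) * l i) + (b : ℕ) * (n - 1))) ^ (b' : ℕ) := by
    intro b'
    rw [← pow_mul, ← mul_assoc, mul_comm (β ^ _), mul_assoc, ← pow_add]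
    ring_nf
  rw [Finset.sum_congr rfl fun b' _ => hsum b', ← Finset.mul_sum,
    geom_sum_root n _ (by rw [← pow_mul, mul_comm, pow_mul, hβn, one_pow]),
    key_iff hn0 hβ _ b]
  by_cases hb : (b : ℕ) = ((a : ℕ) + (j : ℕ) * l i) % n
  · simp [hb, inv_mul_cancel₀ hninv]
  · simp [hb]
end

section
/- Let n be prime and β of order n in a field F with n invertible. For the n² × n² binary matrix M = [CPM(β^{ij})]_{0≤i,j<n} (the CPM-dispersion of the full Vandermonde matrix V), any two distinct columns of M share at most one common 1-position. -/
/-- For a prime `n`, the `n² × n²` binary CPM-dispersion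
`M = [CPM(β^{ij})]_{0≤i,j<n}` of the full Vandermonde matrix (block `(i,j)` has `(a,b)`
entry `1` iff `b ≡ a + i·j (mod n)`) satisfies the RC-constraint: any two distinct
columns of `M` share at most one common 1-position. -/
theorem vandermonde_cpm_dispersion_rc_constraint
    (F : Type*) [Field F] (n : ℕ) (hn : n.Prime)
    (β : F) (hβ : orderOf β = n) (hninv : (n : F) ≠ 0)
    (M : Matrix (Fin n × Fin n) (Fin n × Fin n) (ZMod 2))
    (hM : ∀ (i : Fin n) (a : Fin n) (j : Fin n) (b : Fin n),
      M (i, a) (j, b) = if (b : ℕ) = ((a : ℕ) + (i : ℕ) * (j : ℕ)) % n then 1 else 0) :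
    ∀ c c' : Fin n × Fin n, c ≠ c' →
      (Finset.univ.filter
        (fun r : Fin n × Fin n => M r c = 1 ∧ M r c' = 1)).card ≤ 1 := by
  haveI : Fact n.Prime := ⟨hn⟩
  haveI : NeZero n := ⟨hn.pos.ne'⟩
  have castinj : Function.Injective (fun x : Fin n => ((x : ℕ) : ZMod n)) := by
    intro x y h
    apply Fin.ext
    have := congrArg ZMod.val h
    rwa [ZMod.val_natCast_of_lt x.isLt, ZMod.val_natCast_of_lt y.isLt] at this
  rintro ⟨j, b⟩ ⟨j', b'⟩ hne
  rw [Finset.card_le_one]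
  rintro ⟨i, a⟩ h1 ⟨i', a'⟩ h2
  simp only [Finset.mem_filter, Finset.mem_univ, true_and, hM] at h1 h2
  have key : ∀ (x y u v : Fin n), ((if (y : ℕ) = ((x : ℕ) + (u : ℕ) * (v : ℕ)) % n then 1 else 0 : ZMod 2) = 1) →
      ((y : ℕ) : ZMod n) = ((x : ℕ) : ZMod n) + ((u : ℕ) : ZMod n) * ((v : ℕ) : ZMod n) := by
    intro x y u v h
    split_ifs at h with hc
    · rw [hc]
      push_cast [ZMod.natCast_mod]
      ring
    · exact absurd h (by decide)
  have e1 := key a b i j h1.1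
  have e2 := key a b' i j' h1.2
  have e3 := key a' b i' j h2.1
  have e4 := key a' b' i' j' h2.2
  by_cases hjj : j = j'
  · subst hjj
    exfalso
    apply hne
    have : ((b : ℕ) : ZMod n) = ((b' : ℕ) : ZMod n) := by rw [e1, e2]
    rw [castinj this]
  · have hj : ((j : ℕ) : ZMod n) - ((j' : ℕ) : ZMod n) ≠ 0 := by
      intro h
      exact hjj (castinj (by linear_combination (norm := ring_nf) h))
    have hii : ((i : ℕ) : ZMod n) = ((i' : ℕ) : ZMod n) := by
      have hmul : (((i : ℕ) : ZMod n) - ((i' : ℕ) : ZMod n)) * (((j : ℕ) : ZMod n) - ((j' : ℕ) : ZMod n)) = 0 := by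
        linear_combination e2 - e1 + e3 - e4
      rcases mul_eq_zero.mp hmul with h | h
      · linear_combination h
      · exact absurd h hj
    have hi : i = i' := castinj hii
    subst hi
    have ha : a = a' := castinj (by linear_combination e3 - e1)
    subst ha
    rfl
end
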